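/- Let K be a field, let n_1,…,n_k, q_1,…,q_k, m, r ∈ ℕ, and set h = 3m + n_1 + ⋯ + n_k. Let π_1, π_2, π_3 : K^h → K^{2m} be the projections onto coordinates {1,…,2m}, {m+1,…,3m}, and {1,…,m} ∪ {2m+1,…,3m} respectively, and let p_j : K^h → K^{n_j} be the projection onto the j-th block of the last n_1 + ⋯ + n_k coordinates. If V ⊆ K^h is a linear subspace with dim(π_i(V)) ≤ 2r for i = 1,2,3 and dim(p_j(V)) ≤ q_j for j = 1,…,k, then dim V ≤ Σ_{j=1}^{k} q_j + 3r. -/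

import Mathlib

open LinearMap Module Submodule

section aux

variable {K : Type*} [Field K] {M N : Type*} [AddCommGroup M] [Module K M]
  [AddCommGroup N] [Module K N]

lemma aux1 (f : M →ₗ[K] N) (p : Submodule K M) [FiniteDimensional K p] :
    finrank K (p.map f) + finrank K ↥(p ⊓ ker f) = finrank K p := by
  have h := LinearMap.finrank_range_add_finrank_ker (f.domRestrict p)
  rw [LinearMap.range_domRestrict, LinearMap.ker_domRestrict] at h
  have e : finrank K ↥((ker f).comap p.subtype) = finrank K ↥(p ⊓ ker f) := by
    have e2 := LinearEquiv.finrank_eq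
      (Submodule.equivMapOfInjective p.subtype p.injective_subtype
        ((ker f).comap p.subtype))
    rw [Submodule.map_comap_subtype] at e2
    exact e2
  omega

lemma aux2 (f : M →ₗ[K] N) (p : Submodule K M) [FiniteDimensional K p]
    (hinj : ∀ x ∈ p, f x = 0 → x = 0) :
    finrank K p = finrank K (p.map f) := by
  have h := aux1 f p
  have hb : p ⊓ ker f = ⊥ := by
    rw [eq_bot_iff]
    rintro x ⟨hx, hk⟩
    exact hinj x hx hk
  rw [hb] at h
  simp only [finrank_bot] at h
  omega

end aux

section funspace

variable {K : Type*} [Field K] {ι : Type*} [Fintype ι]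

lemma cover_le {β γ : Type*} (f : β → ι) (g : γ → ι)
    (hcov : ∀ i : ι, (∃ b, f b = i) ∨ (∃ c, g c = i)) (p : Submodule K (ι → K)) :
    finrank K p ≤ finrank K (p.map (LinearMap.funLeft K K f))
      + finrank K (p.map (LinearMap.funLeft K K g)) := by
  have h := aux1 (LinearMap.funLeft K K f) p
  have h2 : finrank K ↥(p ⊓ ker (LinearMap.funLeft K K f))
      ≤ finrank K (p.map (LinearMap.funLeft K K g)) := by
    rw [aux2 (LinearMap.funLeft K K g) (p ⊓ ker (LinearMap.funLeft K K f)) ?_]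
    · exact Submodule.finrank_mono (Submodule.map_mono inf_le_left)
    · rintro x ⟨hx, hk⟩ hg
      funext i
      rcases hcov i with ⟨b, rfl⟩ | ⟨c, rfl⟩
      · exact congrFun hk b
      · exact congrFun hg c
  omega

lemma sum_le {J : Type*} {β : J → Type*} (f : ∀ j, β j → ι) (s : Finset J)
    (p : Submodule K (ι → K))
    (h0 : ∀ x ∈ p, (∀ j ∈ s, ∀ b, x (f j b) = 0) → x = 0) :
    finrank K p ≤ ∑ j ∈ s, finrank K (p.map (LinearMap.funLeft K K (f j))) := by
  classical
  induction s using Finset.induction_on generalizing p with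
  | empty =>
    have : p = ⊥ := by
      rw [eq_bot_iff]; intro x hx
      exact h0 x hx (by simp)
    simp [this]
  | @insert a s ha ih =>
    have h := aux1 (LinearMap.funLeft K K (f a)) p
    have hq := ih (p ⊓ ker (LinearMap.funLeft K K (f a))) ?_
    · have hmono : ∀ j ∈ s,
          finrank K ((p ⊓ ker (LinearMap.funLeft K K (f a))).map
            (LinearMap.funLeft K K (f j)))
          ≤ finrank K (p.map (LinearMap.funLeft K K (f j))) := fun j _ =>
        Submodule.finrank_mono (Submodule.map_mono inf_le_left)
      have hs := Finset.sum_le_sum hmono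
      rw [Finset.sum_insert ha]
      omega
    · rintro x ⟨hx, hk⟩ hall
      refine h0 x hx ?_
      intro j hj b
      rcases Finset.mem_insert.mp hj with rfl | hj
      · exact congrFun hk b
      · exact hall j hj b

end funspace

private lemma gg1_lt (m : ℕ) (i : Fin (2 * m)) : (i : ℕ) < 3 * m := by
  have := i.isLt; omega

private def gg1 (m : ℕ) : Fin (2 * m) → Fin (3 * m) :=
  fun i => ⟨(i : ℕ), gg1_lt m i⟩

private lemma gg2_lt (m : ℕ) (i : Fin (2 * m)) : m + (i : ℕ) < 3 * m := by
  have := i.isLt; omega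

private def gg2 (m : ℕ) : Fin (2 * m) → Fin (3 * m) :=
  fun i => ⟨m + (i : ℕ), gg2_lt m i⟩

private lemma gg3_lt (m : ℕ) (i : Fin (2 * m)) :
    (if (i : ℕ) < m then (i : ℕ) else m + (i : ℕ)) < 3 * m := by
  have := i.isLt; split <;> omega

private def gg3 (m : ℕ) : Fin (2 * m) → Fin (3 * m) :=
  fun i => ⟨if (i : ℕ) < m then (i : ℕ) else m + (i : ℕ),
    gg3_lt m i⟩

private def ggB (m : ℕ) : Fin m → Fin (3 * m) :=
  fun i => ⟨m + (i : ℕ), by have := i.isLt; omega⟩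

private def ggB' (m : ℕ) : Fin m → Fin (2 * m) :=
  fun i => ⟨(i : ℕ), by have := i.isLt; omega⟩

theorem stmt4 (K : Type*) [Field K] (k m r : ℕ) (n q : Fin k → ℕ)
    (V : Submodule K ((Fin (3 * m) ⊕ (Σ j : Fin k, Fin (n j))) → K))
    (h1 : Module.finrank K (V.map (LinearMap.funLeft K K
      (fun i : Fin (2 * m) => Sum.inl ⟨(i : ℕ), by have := i.isLt; omega⟩))) ≤ 2 * r)
    (h2 : Module.finrank K (V.map (LinearMap.funLeft K K
      (fun i : Fin (2 * m) => Sum.inl ⟨m + (i : ℕ), by have := i.isLt; omega⟩))) ≤ 2 * r)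
    (h3 : Module.finrank K (V.map (LinearMap.funLeft K K
      (fun i : Fin (2 * m) => Sum.inl ⟨if (i : ℕ) < m then (i : ℕ) else m + (i : ℕ),
        by have := i.isLt; split <;> omega⟩))) ≤ 2 * r)
    (hp : ∀ j : Fin k, Module.finrank K (V.map (LinearMap.funLeft K K
      (fun t : Fin (n j) => Sum.inr ⟨j, t⟩))) ≤ q j) :
    Module.finrank K V ≤ (∑ j, q j) + 3 * r := by
  classical
  let ι := Fin (3 * m) ⊕ (Σ j : Fin k, Fin (n j))
  let W : Submodule K (Fin (3 * m) → K) :=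
    V.map (LinearMap.funLeft K K (Sum.inl : Fin (3 * m) → ι))
  have key : ∀ (g : Fin (2 * m) → Fin (3 * m)),
      V.map (LinearMap.funLeft K K (fun i => (Sum.inl (g i) : ι)))
        = W.map (LinearMap.funLeft K K g) := by
    intro g
    show _ = (V.map (LinearMap.funLeft K K (Sum.inl : Fin (3 * m) → ι))).map
      (LinearMap.funLeft K K g)
    rw [← Submodule.map_comp, ← LinearMap.funLeft_comp]
    rfl
  have h1' : finrank K (W.map (LinearMap.funLeft K K (gg1 m))) ≤ 2 * r := by
    rw [← key (gg1 m)]; exact h1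
  have h2' : finrank K (W.map (LinearMap.funLeft K K (gg2 m))) ≤ 2 * r := by
    rw [← key (gg2 m)]; exact h2
  have h3' : finrank K (W.map (LinearMap.funLeft K K (gg3 m))) ≤ 2 * r := by
    rw [← key (gg3 m)]; exact h3
  -- Step A : finrank V ≤ finrank W + ∑ q
  have hVker : finrank K W
      + finrank K ↥(V ⊓ ker (LinearMap.funLeft K K (Sum.inl : Fin (3 * m) → ι)))
      = finrank K V := aux1 _ V
  have hker_le : finrank K ↥(V ⊓ ker (LinearMap.funLeft K K (Sum.inl : Fin (3 * m) → ι)))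
      ≤ ∑ j, q j := by
    have hs := sum_le (ι := ι) (β := fun j : Fin k => Fin (n j))
      (fun j t => Sum.inr ⟨j, t⟩) Finset.univ
      (V ⊓ ker (LinearMap.funLeft K K (Sum.inl : Fin (3 * m) → ι))) ?_
    · refine hs.trans (Finset.sum_le_sum fun j _ => ?_)
      exact le_trans (Submodule.finrank_mono (Submodule.map_mono inf_le_left)) (hp j)
    · rintro x ⟨hx, hk⟩ hall
      funext i
      rcases i with i | ⟨j, t⟩
      · exact congrFun hk i
      · exact hall j (Finset.mem_univ j) t
  -- Step B : finrank W ≤ 3 * r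
  have b1 : finrank K W ≤ finrank K (W.map (LinearMap.funLeft K K (gg3 m)))
      + finrank K (W.map (LinearMap.funLeft K K (ggB m))) := by
    refine cover_le (gg3 m) (ggB m) (fun i => ?_) W
    rcases i with ⟨i, hi⟩
    by_cases h : i < m
    · refine Or.inl ⟨⟨i, by omega⟩, ?_⟩
      simp only [gg3]
      exact Fin.ext (by simp [h])
    · by_cases h' : i < 2 * m
      · refine Or.inr ⟨⟨i - m, by omega⟩, ?_⟩
        simp only [ggB]
        exact Fin.ext (by simp; omega)
      · refine Or.inl ⟨⟨i - m, by omega⟩, ?_⟩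
        simp only [gg3]
        refine Fin.ext ?_
        show (if i - m < m then i - m else m + (i - m)) = i
        rw [if_neg (by omega)]
        omega
  have b2 : finrank K W + finrank K (W.map (LinearMap.funLeft K K (ggB m)))
      ≤ finrank K (W.map (LinearMap.funLeft K K (gg1 m)))
        + finrank K (W.map (LinearMap.funLeft K K (gg2 m))) := by
    have e1 : finrank K (W.map (LinearMap.funLeft K K (gg1 m)))
        + finrank K ↥(W ⊓ ker (LinearMap.funLeft K K (gg1 m)))
        = finrank K W := aux1 _ W
    have e2 : finrank K ((W.map (LinearMap.funLeft K K (gg2 m))).map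
          (LinearMap.funLeft K K (ggB' m)))
        + finrank K ↥((W.map (LinearMap.funLeft K K (gg2 m)))
            ⊓ ker (LinearMap.funLeft K K (ggB' m)))
        = finrank K (W.map (LinearMap.funLeft K K (gg2 m))) := aux1 _ _
    have e3 : (W.map (LinearMap.funLeft K K (gg2 m))).map
          (LinearMap.funLeft K K (ggB' m))
        = W.map (LinearMap.funLeft K K (ggB m)) := by
      rw [← Submodule.map_comp, ← LinearMap.funLeft_comp]
      rfl
    have e4 : finrank K ↥(W ⊓ ker (LinearMap.funLeft K K (gg1 m)))
        ≤ finrank K ↥((W.map (LinearMap.funLeft K K (gg2 m)))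
            ⊓ ker (LinearMap.funLeft K K (ggB' m))) := by
      rw [aux2 (LinearMap.funLeft K K (gg2 m))
        (W ⊓ ker (LinearMap.funLeft K K (gg1 m))) ?_]
      · refine Submodule.finrank_mono ?_
        rintro y ⟨x, hxU, rfl⟩
        rcases hxU with ⟨hxW, hxk⟩
        refine ⟨⟨x, hxW, rfl⟩, ?_⟩
        simp only [SetLike.mem_coe, LinearMap.mem_ker]
        funext i
        show x (gg2 m (ggB' m i)) = 0
        have hh : gg2 m (ggB' m i) = gg1 m ⟨m + (i : ℕ), by have := i.isLt; omega⟩ :=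
          Fin.ext rfl
        rw [hh]
        exact congrFun hxk _
      · rintro x ⟨hxW, hxk⟩ hg
        funext i
        rcases i with ⟨i, hi⟩
        by_cases h : i < 2 * m
        · have hh : (⟨i, hi⟩ : Fin (3 * m)) = gg1 m ⟨i, h⟩ := Fin.ext rfl
          rw [hh]
          exact congrFun hxk _
        · have hh : (⟨i, hi⟩ : Fin (3 * m)) = gg2 m ⟨i - m, by omega⟩ :=
            Fin.ext (by simp [gg2]; omega)
          rw [hh]
          exact congrFun hg _
    rw [e3] at e2
    omega
  omega
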